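/- Let (X_n)_{n≥0} and (Y_n)_{n≥0} be sequences of positive real numbers satisfying, for all n ≥ 0, the recursive inequalities X_{n+1} ≤ c b^n (X_n^{1+α} + X_n^α Y_n^{1+κ}) and Y_{n+1} ≤ c b^n (X_n + Y_n^{1+κ}), where c, b > 1 and α, κ > 0 are given constants. Set σ = min{κ, α}. If X_0 + Y_0^{1+κ} ≤ (2c)^{-(1+κ)/σ} · b^{-(1+κ)/σ²}, then X_n → 0 and Y_n → 0 as n → ∞. -/
import Mathlib


open Filter

lemma fgc_keyeq (c b κ σ : ℝ) (hc : 0 < c) (hb : 0 < b) (hσ : 0 < σ) (n : ℕ) :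
    (2*c) ^ (1+κ) * (b ^ (n:ℝ)) ^ (1+κ) *
      ((2*c) ^ (-((1+κ)/σ)) * b ^ (-((1+κ)/σ)/σ) * (b ^ (-((1+κ)/σ))) ^ (n:ℝ)) ^ (1+σ)
    = (2*c) ^ (-((1+κ)/σ)) * b ^ (-((1+κ)/σ)/σ) * (b ^ (-((1+κ)/σ))) ^ ((n:ℝ)+1) := by
  have h2c : (0:ℝ) < 2*c := by linarith
  simp only [Real.rpow_def_of_pos h2c, Real.rpow_def_of_pos hb, ← Real.exp_add,
    ← Real.exp_mul, Real.exp_eq_exp]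
  field_simp
  ring

/-- Fast geometric convergence lemma for coupled nonlinear recursive inequalities. -/
theorem fast_geometric_convergence
    (X Y : ℕ → ℝ) (hX : ∀ n, 0 < X n) (hY : ∀ n, 0 < Y n)
    (c b α κ σ : ℝ) (hc : 1 < c) (hb : 1 < b) (hα : 0 < α) (hκ : 0 < κ)
    (hσ : σ = min κ α)
    (hrecX : ∀ n, X (n + 1) ≤ c * b ^ n * (X n ^ (1 + α) + X n ^ α * Y n ^ (1 + κ)))
    (hrecY : ∀ n, Y (n + 1) ≤ c * b ^ n * (X n + Y n ^ (1 + κ)))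
    (h0 : X 0 + Y 0 ^ (1 + κ) ≤ (2 * c) ^ (-(1 + κ) / σ) * b ^ (-(1 + κ) / σ ^ 2)) :
    Tendsto X atTop (nhds 0) ∧ Tendsto Y atTop (nhds 0) := by
  have hσ0 : 0 < σ := hσ ▸ lt_min hκ hα
  have hσκ : σ ≤ κ := hσ ▸ min_le_left _ _
  have hσα : σ ≤ α := hσ ▸ min_le_right _ _
  have hb0 : (0:ℝ) < b := by linarith
  have hc0 : (0:ℝ) < c := by linarith
  have h2c : (0:ℝ) < 2*c := by linarith
  set μ : ℝ := (1+κ)/σ with hμdef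
  have hμ0 : 0 < μ := div_pos (by linarith) hσ0
  set A : ℝ := (2*c) ^ (-μ) * b ^ (-μ/σ) with hAdef
  set r : ℝ := b ^ (-μ) with hrdef
  have hr0 : 0 < r := Real.rpow_pos_of_pos hb0 _
  have hA0 : 0 < A := mul_pos (Real.rpow_pos_of_pos h2c _) (Real.rpow_pos_of_pos hb0 _)
  have hA1 : A ≤ 1 := by
    have h1 : (2*c) ^ (-μ) ≤ 1 :=
      Real.rpow_le_one_of_one_le_of_nonpos (by linarith) (by linarith)
    have h2 : b ^ (-μ/σ) ≤ 1 :=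
      Real.rpow_le_one_of_one_le_of_nonpos hb.le
        (by rw [neg_div]; exact neg_nonpos.mpr (div_nonneg hμ0.le hσ0.le))
    calc A ≤ 1 * 1 := mul_le_mul h1 h2 (Real.rpow_pos_of_pos hb0 _).le zero_le_one
    _ = 1 := by ring
  have hr1 : r ≤ 1 := Real.rpow_le_one_of_one_le_of_nonpos hb.le (by linarith)
  -- main induction
  have key : ∀ n, X n + Y n ^ (1+κ) ≤ A * r ^ (n:ℝ) := by
    intro n
    induction n with
    | zero =>
      simp only [Nat.cast_zero, Real.rpow_zero, mul_one]
      have e1 : -(1+κ)/σ = -μ := by rw [hμdef]; ring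
      have e2 : -(1+κ)/σ^2 = -μ/σ := by rw [hμdef]; ring
      rw [e1, e2] at h0
      exact h0
    | succ n ih =>
      set Z : ℝ := X n + Y n ^ (1+κ) with hZdef
      have hYp : 0 < Y n ^ (1+κ) := Real.rpow_pos_of_pos (hY n) _
      have hZ0 : 0 < Z := add_pos (hX n) hYp
      have hrn1 : r ^ (n:ℝ) ≤ 1 := Real.rpow_le_one hr0.le hr1 (Nat.cast_nonneg n)
      have hZ1 : Z ≤ 1 := ih.trans (by
        calc A * r ^ (n:ℝ) ≤ 1 * 1 := mul_le_mul hA1 hrn1 (Real.rpow_nonneg hr0.le _) zero_le_one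
        _ = 1 := by ring)
      have hXZ : X n ≤ Z := le_add_of_nonneg_right hYp.le
      have hbn1 : (1:ℝ) ≤ b ^ n := one_le_pow₀ hb.le
      have hbn0 : (0:ℝ) < b ^ n := by positivity
      -- bound X (n+1)
      have hXstep : X (n+1) ≤ c * b ^ n * Z ^ (1+σ) := by
        have e : X n ^ (1+α) + X n ^ α * Y n ^ (1+κ) = X n ^ α * Z := by
          rw [Real.rpow_add (hX n), Real.rpow_one]; ring
        have hXa : X n ^ α ≤ Z ^ σ :=
          (Real.rpow_le_rpow (hX n).le hXZ hα.le).trans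
            (Real.rpow_le_rpow_of_exponent_ge hZ0 hZ1 hσα)
        calc X (n+1) ≤ c * b ^ n * (X n ^ α * Z) := by rw [← e]; exact hrecX n
        _ ≤ c * b ^ n * (Z ^ σ * Z) := by
            apply mul_le_mul_of_nonneg_left (mul_le_mul_of_nonneg_right hXa hZ0.le)
            positivity
        _ = c * b ^ n * Z ^ (1+σ) := by
            rw [Real.rpow_add hZ0, Real.rpow_one]; ring
      -- bound Y (n+1) ^ (1+κ)
      have hYstep : Y (n+1) ^ (1+κ) ≤ c ^ (1+κ) * (b ^ n) ^ (1+κ) * Z ^ (1+σ) := by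
        have h1 : Y (n+1) ^ (1+κ) ≤ (c * b ^ n * Z) ^ (1+κ) :=
          Real.rpow_le_rpow (hY _).le (hrecY n) (by linarith)
        have h2 : (c * b ^ n * Z) ^ (1+κ) = c ^ (1+κ) * (b ^ n) ^ (1+κ) * Z ^ (1+κ) := by
          rw [Real.mul_rpow (by positivity) hZ0.le, Real.mul_rpow hc0.le hbn0.le]
        have h3 : Z ^ (1+κ) ≤ Z ^ (1+σ) :=
          Real.rpow_le_rpow_of_exponent_ge hZ0 hZ1 (by linarith)
        calc Y (n+1) ^ (1+κ) ≤ c ^ (1+κ) * (b ^ n) ^ (1+κ) * Z ^ (1+κ) := h2 ▸ h1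
        _ ≤ c ^ (1+κ) * (b ^ n) ^ (1+κ) * Z ^ (1+σ) := by
            apply mul_le_mul_of_nonneg_left h3; positivity
      -- combine
      have hcb : c * b ^ n ≤ c ^ (1+κ) * (b ^ n) ^ (1+κ) := by
        have h1 : c = c ^ (1:ℝ) := (Real.rpow_one c).symm
        have h2 : (b ^ n : ℝ) = (b ^ n : ℝ) ^ (1:ℝ) := (Real.rpow_one _).symm
        calc c * b ^ n = c ^ (1:ℝ) * (b ^ n : ℝ) ^ (1:ℝ) := by rw [← h1, ← h2]
        _ ≤ c ^ (1+κ) * (b ^ n) ^ (1+κ) :=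
            mul_le_mul (Real.rpow_le_rpow_of_exponent_le hc.le (by linarith))
              (Real.rpow_le_rpow_of_exponent_le hbn1 (by linarith))
              (by positivity) (by positivity)
      have h2cκ : 2 * c ^ (1+κ) ≤ (2*c) ^ (1+κ) := by
        rw [Real.mul_rpow (by norm_num) hc0.le]
        apply mul_le_mul_of_nonneg_right _ (by positivity)
        calc (2:ℝ) = 2 ^ (1:ℝ) := (Real.rpow_one 2).symm
        _ ≤ 2 ^ (1+κ) := Real.rpow_le_rpow_of_exponent_le (by norm_num) (by linarith)
      have hcomb : X (n+1) + Y (n+1) ^ (1+κ) ≤ (2*c) ^ (1+κ) * (b ^ n) ^ (1+κ) * Z ^ (1+σ) := by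
        have hZσ0 : (0:ℝ) ≤ Z ^ (1+σ) := by positivity
        have hbκ0 : (0:ℝ) ≤ (b ^ n : ℝ) ^ (1+κ) := by positivity
        calc X (n+1) + Y (n+1) ^ (1+κ)
            ≤ c * b ^ n * Z ^ (1+σ) + c ^ (1+κ) * (b ^ n) ^ (1+κ) * Z ^ (1+σ) :=
              add_le_add hXstep hYstep
        _ ≤ 2 * (c ^ (1+κ) * (b ^ n) ^ (1+κ) * Z ^ (1+σ)) := by
            have := mul_le_mul_of_nonneg_right hcb hZσ0
            linarith
        _ ≤ (2*c) ^ (1+κ) * (b ^ n) ^ (1+κ) * Z ^ (1+σ) := by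
            have := mul_le_mul_of_nonneg_right
              (mul_le_mul_of_nonneg_right h2cκ hbκ0) hZσ0
            calc 2 * (c ^ (1+κ) * (b ^ n) ^ (1+κ) * Z ^ (1+σ))
                = 2 * c ^ (1+κ) * (b ^ n) ^ (1+κ) * Z ^ (1+σ) := by ring
            _ ≤ (2*c) ^ (1+κ) * (b ^ n) ^ (1+κ) * Z ^ (1+σ) := this
      have hZfin : Z ^ (1+σ) ≤ (A * r ^ (n:ℝ)) ^ (1+σ) :=
        Real.rpow_le_rpow hZ0.le ih (by linarith)
      have hbncast : (b ^ n : ℝ) = b ^ (n:ℝ) := (Real.rpow_natCast b n).symm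
      calc X (n+1) + Y (n+1) ^ (1+κ)
          ≤ (2*c) ^ (1+κ) * (b ^ n) ^ (1+κ) * Z ^ (1+σ) := hcomb
      _ ≤ (2*c) ^ (1+κ) * (b ^ n) ^ (1+κ) * (A * r ^ (n:ℝ)) ^ (1+σ) := by
          apply mul_le_mul_of_nonneg_left hZfin; positivity
      _ = A * r ^ ((n:ℝ)+1) := by
          rw [hbncast, hAdef, hrdef, hμdef]
          exact fgc_keyeq c b κ σ hc0 hb0 hσ0 n
      _ = A * r ^ ((n+1 : ℕ):ℝ) := by push_cast; ring_nf
  -- convert to nat pow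
  have key' : ∀ n, X n + Y n ^ (1+κ) ≤ A * r ^ n := fun n => by
    rw [← Real.rpow_natCast r n]; exact key n
  have hrlt1 : r < 1 := Real.rpow_lt_one_of_one_lt_of_neg hb (by linarith)
  have htend : Tendsto (fun n => A * r ^ n) atTop (nhds 0) := by
    have := (tendsto_pow_atTop_nhds_zero_of_lt_one hr0.le hrlt1).const_mul A
    simpa using this
  constructor
  · apply squeeze_zero (fun n => (hX n).le) (fun n => ?_) htend
    exact (le_add_of_nonneg_right (Real.rpow_pos_of_pos (hY n) _).le).trans (key' n)
  · have hκ1 : (0:ℝ) < 1 + κ := by linarith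
    have hYle : ∀ n, Y n ≤ (A * r ^ n) ^ (1/(1+κ)) := by
      intro n
      have h1 : Y n ^ (1+κ) ≤ A * r ^ n :=
        (le_add_of_nonneg_left (hX n).le).trans (key' n)
      have h2 : (Y n ^ (1+κ)) ^ (1/(1+κ)) ≤ (A * r ^ n) ^ (1/(1+κ)) :=
        Real.rpow_le_rpow (Real.rpow_nonneg (hY n).le _) h1 (one_div_pos.mpr hκ1).le
      rwa [← Real.rpow_mul (hY n).le, mul_one_div, div_self hκ1.ne', Real.rpow_one] at h2
    have htendY : Tendsto (fun n => (A * r ^ n) ^ (1/(1+κ))) atTop (nhds 0) := by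
      have := htend.rpow_const (p := 1/(1+κ)) (Or.inr (one_div_pos.mpr hκ1).le)
      rwa [Real.zero_rpow (one_div_ne_zero hκ1.ne')] at this
    exact squeeze_zero (fun n => (hY n).le) hYle htendY
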